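/- Let K be a field, A a finite-dimensional K-algebra, and e an idempotent of A. If A is a symmetric algebra (i.e., A is isomorphic to its K-linear dual Hom_K(A,K) as an A-A-bimodule), then the algebra eAe is also a symmetric algebra. -/

import Mathlib

/-- A (possibly non-unital) finite-dimensional `K`-algebra is *symmetric* if it admits a
nondegenerate associative symmetric bilinear form into `K`. -/
def IsSymmAlg (K A : Type*) [Field K] [NonUnitalNonAssocRing A] [Module K A] : Prop :=
  ∃ f : A →ₗ[K] A →ₗ[K] K,
    (∀ a b c : A, f (a * b) c = f a (b * c)) ∧
    (∀ a b : A, f a b = f b a) ∧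
    (∀ a : A, (∀ b : A, f a b = 0) → a = 0)

/-- The corner algebra `eAe` of an idempotent `e`. -/
def corner (K : Type*) {A : Type*} [Field K] [Ring A] [Algebra K A] (e : A)
    (he : e * e = e) : NonUnitalSubalgebra K A where
  carrier := {x | e * x * e = x}
  add_mem' := by
    intro a b ha hb
    simp only [Set.mem_setOf_eq] at *
    rw [mul_add, add_mul, ha, hb]
  zero_mem' := by simp
  mul_mem' := by
    intro a b ha hb
    simp only [Set.mem_setOf_eq] at *
    have h1 : e * a = a := by rw [← ha]; simp only [← mul_assoc, he]
    have h2 : b * e = b := by rw [← hb]; simp only [mul_assoc, he]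
    calc e * (a * b) * e = (e * a) * (b * e) := by simp only [mul_assoc]
      _ = a * b := by rw [h1, h2]
  smul_mem' := by
    intro c x hx
    simp only [Set.mem_setOf_eq] at *
    rw [mul_smul_comm, smul_mul_assoc, hx]

/-- If `A` is a finite-dimensional symmetric `K`-algebra and `e` is an idempotent of `A`,
then the corner algebra `eAe` is also a symmetric algebra. -/
theorem stmt0 {K A : Type*} [Field K] [Ring A] [Algebra K A] [FiniteDimensional K A]
    (e : A) (he : e * e = e) (hA : IsSymmAlg K A) :
    IsSymmAlg K (corner K e he) := by
  obtain ⟨f, hassoc, hsymm, hnd⟩ := hA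
  set S := corner K e he
  let ι : S →ₗ[K] A := S.toSubmodule.subtype
  refine ⟨(f.compl₁₂ ι ι), ?_, ?_, ?_⟩
  · intro a b c
    exact hassoc a b c
  · intro a b
    exact hsymm a b
  · intro a ha
    have hmem : (e : A) * a * e = a := a.2
    have key : ∀ x : A, f (a : A) x = 0 := by
      intro x
      have hx : e * (e * x * e) * e = e * x * e := by
        simp only [← mul_assoc, he]
        simp only [mul_assoc, he]
      have hb := ha ⟨e * x * e, hx⟩
      simp only [LinearMap.compl₁₂_apply] at hb
      have h1 : e * (a : A) = a := by
        conv_lhs => rw [← hmem]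
        rw [← mul_assoc, ← mul_assoc, he, hmem]
      have h2 : (a : A) * e = a := by
        conv_lhs => rw [← hmem]
        rw [mul_assoc, he, hmem]
      have : f (a : A) x = f (a : A) (e * x * e) :=
        calc f (a : A) x = f (e * a : A) x := by rw [h1]
          _ = f e ((a : A) * x) := hassoc _ _ _
          _ = f ((a : A) * x) e := hsymm _ _
          _ = f (a : A) (x * e) := hassoc _ _ _
          _ = f ((a : A) * e) (x * e) := by rw [h2]
          _ = f (a : A) (e * (x * e)) := hassoc _ _ _
          _ = f (a : A) (e * x * e) := by rw [mul_assoc]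
      rw [this]
      exact hb
    have : (a : A) = 0 := hnd _ key
    exact Subtype.ext this
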